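/- Fix an integer n ≥ 4 and a real number r0 > 0, define b : (r0, ∞) → ℝ by b(s) = r0 · ∫_{s/r0}^∞ (t^{2n−4} − 1)^{−1/2} dt, and define Υ : {x ∈ ℝⁿ : ‖x‖ > r0} → ℝ by Υ(x) = b(‖x‖), where ‖·‖ is the Euclidean norm. Then for every x with ‖x‖ > r0, writing p ∈ ℝⁿ for the gradient of Υ at x and H for the Hessian matrix of second partial derivatives of Υ at x, one has Σ_{i,j} (δ_{ij} − (1 + ‖p‖²)^{−1} p_i p_j) · (1 + ‖p‖²)^{−1/2} · H_{ij} = −r0^{n−2} · ‖x‖^{1−n}. -/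

import Mathlib

/-- The Schoen-Yau/Eichmair barrier profile
`b(s) = r0 · ∫_{s/r0}^∞ (t^{2n-4} - 1)^{-1/2} dt`. -/
noncomputable def jangB (n : ℕ) (r0 : ℝ) (s : ℝ) : ℝ :=
  r0 * ∫ t in Set.Ioi (s / r0), (t ^ (2 * n - 4) - 1) ^ (-(1 / 2) : ℝ)

/-- The partial derivative of `f : ℝⁿ → ℝ` in the `i`-th coordinate direction. -/
noncomputable def pder {n : ℕ} (f : EuclideanSpace ℝ (Fin n) → ℝ) (i : Fin n)
    (x : EuclideanSpace ℝ (Fin n)) : ℝ :=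
  fderiv ℝ f x (EuclideanSpace.single i 1)

open Set MeasureTheory


noncomputable def ggJ (m : ℕ) (t : ℝ) : ℝ := (t ^ m - 1) ^ (-(1 / 2) : ℝ)

lemma ggJ_base_pos {m : ℕ} (hm : m ≠ 0) {t : ℝ} (ht : 1 < t) : (0:ℝ) < t ^ m - 1 := by
  nlinarith [one_lt_pow₀ ht hm]

lemma ggJ_nonneg (m : ℕ) (t : ℝ) (h : (0:ℝ) ≤ t ^ m - 1) : 0 ≤ ggJ m t :=
  Real.rpow_nonneg h _

lemma ggJ_contOn {m : ℕ} (hm : m ≠ 0) : ContinuousOn (ggJ m) (Set.Ioi 1) := by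
  intro t ht
  exact (((continuous_pow m).continuousAt.sub continuousAt_const).rpow_const
    (Or.inl (ggJ_base_pos hm ht).ne')).continuousWithinAt

lemma ggJ_integrableOn {m : ℕ} (hm : 4 ≤ m) {s : ℝ} (hs : 1 < s) :
    IntegrableOn (ggJ m) (Set.Ioi s) := by
  have hm0 : m ≠ 0 := by omega
  have hs0 : (0:ℝ) < s := by linarith
  set c : ℝ := 1 - (s ^ m)⁻¹ with hc
  have hsm : (1:ℝ) < s ^ m := one_lt_pow₀ hs hm0
  have hcpos : 0 < c := by
    have : (s ^ m)⁻¹ < 1 := inv_lt_one_of_one_lt₀ hsm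
    simp only [hc]; linarith
  have hmaj : IntegrableOn (fun t : ℝ => c ^ (-(1/2) : ℝ) * t ^ (-((m:ℝ)/2)))
      (Set.Ioi s) := by
    exact (integrableOn_Ioi_rpow_of_lt (by
      rw [neg_lt_neg_iff]
      have : (4:ℝ) ≤ (m:ℝ) := by exact_mod_cast hm
      linarith) hs0).const_mul _
  refine Integrable.mono' hmaj
    (((ggJ_contOn hm0).mono (Set.Ioi_subset_Ioi hs.le)).aestronglyMeasurable measurableSet_Ioi)
    ?_
  filter_upwards [ae_restrict_mem measurableSet_Ioi] with t ht
  have hts : s < t := ht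
  have ht1 : 1 < t := lt_trans hs hts
  have ht0 : 0 < t := by linarith
  have hb : (0:ℝ) < t ^ m - 1 := ggJ_base_pos hm0 ht1
  have key : c * t ^ m ≤ t ^ m - 1 := by
    have h1 : s ^ m ≤ t ^ m := pow_le_pow_left₀ hs0.le hts.le m
    have h2 : (1:ℝ) ≤ t ^ m * (s ^ m)⁻¹ := by
      rw [le_mul_inv_iff₀ (by linarith)]
      simpa using h1
    rw [hc]
    nlinarith
  have hct : 0 < c * t ^ m := by positivity
  rw [Real.norm_of_nonneg (ggJ_nonneg _ _ hb.le)]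
  calc ggJ m t ≤ (c * t ^ m) ^ (-(1/2) : ℝ) :=
        Real.rpow_le_rpow_of_nonpos hct key (by norm_num)
    _ = c ^ (-(1/2) : ℝ) * t ^ (-((m:ℝ)/2)) := by
        rw [Real.mul_rpow hcpos.le (by positivity), ← Real.rpow_natCast t m,
          ← Real.rpow_mul ht0.le]
        have : (m:ℝ) * (-(1/2)) = -((m:ℝ)/2) := by ring
        rw [this]

lemma ggJ_FTC {m : ℕ} (hm : 4 ≤ m) {s : ℝ} (hs : 1 < s) :
    HasDerivAt (fun u => ∫ t in Set.Ioi u, ggJ m t) (-(ggJ m s)) s := by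
  have hm0 : m ≠ 0 := by omega
  set a : ℝ := (1 + s) / 2 with ha
  have ha1 : 1 < a := by simp only [ha]; linarith
  have has : a < s := by simp only [ha]; linarith
  have hInt : IntegrableOn (ggJ m) (Set.Ioi a) := ggJ_integrableOn hm ha1
  have heq : ∀ u ∈ Set.Ioi a,
      (∫ t in Set.Ioi u, ggJ m t)
        = (∫ t in Set.Ioi a, ggJ m t) - ∫ t in a..u, ggJ m t := by
    intro u hu
    have hau : a ≤ u := (le_of_lt hu)
    rw [intervalIntegral.integral_of_le hau, eq_sub_iff_add_eq, add_comm,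
      ← setIntegral_union (Set.Ioc_disjoint_Ioi le_rfl) measurableSet_Ioi
        (hInt.mono_set Set.Ioc_subset_Ioi_self)
        (hInt.mono_set (Set.Ioi_subset_Ioi hau)),
      Set.Ioc_union_Ioi_eq_Ioi hau]
  have hii : IntervalIntegrable (ggJ m) volume a s :=
    (intervalIntegrable_iff_integrableOn_Ioc_of_le has.le).2
      (hInt.mono_set Set.Ioc_subset_Ioi_self)
  have hmeas : StronglyMeasurableAtFilter (ggJ m) (nhds s) :=
    (ggJ_contOn hm0).stronglyMeasurableAtFilter isOpen_Ioi _ hs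
  have hca : ContinuousAt (ggJ m) s :=
    (ggJ_contOn hm0).continuousAt (Ioi_mem_nhds hs)
  have hd : HasDerivAt (fun u => (∫ t in Set.Ioi a, ggJ m t) - ∫ t in a..u, ggJ m t)
      (-(ggJ m s)) s :=
    (intervalIntegral.integral_hasDerivAt_right hii hmeas hca).const_sub _
  exact hd.congr_of_eventuallyEq
    (Filter.eventuallyEq_of_mem (Ioi_mem_nhds has) heq)

lemma ggJ_hasDerivAt {m : ℕ} (hm : m ≠ 0) {t : ℝ} (ht : 1 < t) :
    HasDerivAt (ggJ m)
      ((m * t ^ (m - 1)) * (-(1/2) : ℝ) * (t ^ m - 1) ^ (-(1/2) - 1 : ℝ)) t := by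
  exact ((hasDerivAt_pow m t).sub_const 1).rpow_const (Or.inl (ggJ_base_pos hm ht).ne')

lemma jangB_hasDerivAt (n : ℕ) (hn : 4 ≤ n) {r0 s : ℝ} (hr0 : 0 < r0) (hs : r0 < s) :
    HasDerivAt (jangB n r0) (-(ggJ (2*n-4) (s/r0))) s := by
  have hm : 4 ≤ 2*n-4 := by omega
  have hu : 1 < s / r0 := (one_lt_div hr0).2 hs
  have h1 : HasDerivAt (fun u : ℝ => u / r0) (1/r0) s := by
    simpa using (hasDerivAt_id s).div_const r0
  have h2 := (ggJ_FTC hm hu).comp s h1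
  have h3 := h2.const_mul r0
  have hfun : jangB n r0 = fun y : ℝ =>
      r0 * ((fun u => ∫ t in Set.Ioi u, ggJ (2*n-4) t) ∘ fun u : ℝ => u / r0) y := rfl
  rw [hfun]
  refine h3.congr_deriv ?_
  field_simp

lemma hasFDerivAt_norm' {E : Type*} [NormedAddCommGroup E] [InnerProductSpace ℝ E]
    {y : E} (hy : y ≠ 0) :
    HasFDerivAt (fun z : E => ‖z‖) (‖y‖⁻¹ • (innerSL ℝ y)) y := by
  have h1 : HasFDerivAt (fun z : E => (inner ℝ z z : ℝ))
      ((fderivInnerCLM ℝ ((id y : E), (id y : E))).comp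
        ((ContinuousLinearMap.id ℝ E).prod (ContinuousLinearMap.id ℝ E))) y :=
    (hasFDerivAt_id y).inner ℝ (hasFDerivAt_id y)
  have hyy : (inner ℝ y y : ℝ) ≠ 0 := by
    rw [real_inner_self_eq_norm_mul_norm]
    exact (mul_pos (norm_pos_iff.2 hy) (norm_pos_iff.2 hy)).ne'
  have h2 : HasDerivAt Real.sqrt (1 / (2 * Real.sqrt (inner ℝ y y : ℝ))) (inner ℝ y y : ℝ) :=
    Real.hasDerivAt_sqrt hyy
  have h3 := h2.comp_hasFDerivAt_of_eq y h1 rfl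
  have h4 : (Real.sqrt ∘ fun z : E => (inner ℝ z z : ℝ)) = fun z : E => ‖z‖ := by
    funext z
    simp [real_inner_self_eq_norm_mul_norm, Real.sqrt_mul_self (norm_nonneg z)]
  rw [h4] at h3
  refine h3.congr_fderiv ?_
  ext v
  have hny : ‖y‖ ≠ 0 := norm_ne_zero_iff.2 hy
  simp [fderivInnerCLM_apply, real_inner_comm y v,
    real_inner_self_eq_norm_mul_norm, Real.sqrt_mul_self (norm_nonneg y)]
  field_simp
  ring

lemma Upsilon_hasFDerivAt (n : ℕ) (hn : 4 ≤ n) {r0 : ℝ} (hr0 : 0 < r0)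
    {y : EuclideanSpace ℝ (Fin n)} (hy : r0 < ‖y‖) :
    HasFDerivAt (fun z : EuclideanSpace ℝ (Fin n) => jangB n r0 ‖z‖)
      ((-(ggJ (2*n-4) (‖y‖/r0)) * ‖y‖⁻¹) • innerSL ℝ y) y := by
  have hy0 : y ≠ 0 := by
    intro h
    rw [h, norm_zero] at hy
    linarith
  have h := (jangB_hasDerivAt n hn hr0 hy).comp_hasFDerivAt y (hasFDerivAt_norm' hy0)
  rw [smul_smul] at h
  exact h

lemma pder_Upsilon (n : ℕ) (hn : 4 ≤ n) {r0 : ℝ} (hr0 : 0 < r0)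
    {y : EuclideanSpace ℝ (Fin n)} (hy : r0 < ‖y‖) (j : Fin n) :
    pder (fun z : EuclideanSpace ℝ (Fin n) => jangB n r0 ‖z‖) j y
      = -(ggJ (2*n-4) (‖y‖/r0)) * ‖y‖⁻¹ * y j := by
  show fderiv ℝ _ y (EuclideanSpace.single j 1) = _
  rw [(Upsilon_hasFDerivAt n hn hr0 hy).fderiv]
  simp [EuclideanSpace.inner_single_right, mul_assoc]

noncomputable def cfJ (n : ℕ) (r0 : ℝ) : ℝ → ℝ := fun u => -(ggJ (2*n-4) (u/r0)) * u⁻¹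

noncomputable def cdJ (n : ℕ) (r0 s : ℝ) : ℝ :=
  -(((2*n-4 : ℕ) : ℝ) * (s/r0) ^ (2*n-4-1) * (-(1/2) : ℝ)
      * ((s/r0) ^ (2*n-4) - 1) ^ (-(1/2) - 1 : ℝ) * (1/r0)) * s⁻¹
    + -(ggJ (2*n-4) (s/r0)) * (-(s^2)⁻¹)

lemma cfJ_hasDerivAt (n : ℕ) (hn : 4 ≤ n) {r0 s : ℝ} (hr0 : 0 < r0) (hs : r0 < s) :
    HasDerivAt (cfJ n r0) (cdJ n r0 s) s := by
  have hs0 : s ≠ 0 := (lt_trans hr0 hs).ne'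
  have hdiv : HasDerivAt (fun u : ℝ => u / r0) (1/r0) s := by
    simpa using (hasDerivAt_id s).div_const r0
  have h1 : HasDerivAt (fun u : ℝ => ggJ (2*n-4) (u/r0))
      ((((2*n-4 : ℕ) : ℝ) * (s/r0) ^ (2*n-4-1) * (-(1/2) : ℝ)
        * ((s/r0) ^ (2*n-4) - 1) ^ (-(1/2) - 1 : ℝ)) * (1/r0)) s := by
    have := (ggJ_hasDerivAt (m := 2*n-4) (by omega) ((one_lt_div hr0).2 hs)).comp s hdiv
    exact this
  have h2 : HasDerivAt (fun u : ℝ => u⁻¹) (-(s^2)⁻¹) s := hasDerivAt_inv hs0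
  have := (h1.neg).mul h2
  exact this

lemma hessian_Upsilon (n : ℕ) (hn : 4 ≤ n) {r0 : ℝ} (hr0 : 0 < r0)
    {x : EuclideanSpace ℝ (Fin n)} (hx : r0 < ‖x‖) (i j : Fin n) :
    pder (pder (fun z : EuclideanSpace ℝ (Fin n) => jangB n r0 ‖z‖) j) i x
      = cfJ n r0 ‖x‖ * (if j = i then 1 else 0)
        + x j * (cdJ n r0 ‖x‖ * (‖x‖⁻¹ * x i)) := by
  have hx0 : x ≠ 0 := by
    intro h
    rw [h, norm_zero] at hx
    linarith
  have hopen : IsOpen {z : EuclideanSpace ℝ (Fin n) | r0 < ‖z‖} :=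
    isOpen_lt continuous_const continuous_norm
  have heq : (fun y => pder (fun z : EuclideanSpace ℝ (Fin n) => jangB n r0 ‖z‖) j y)
      =ᶠ[nhds x] fun y => cfJ n r0 ‖y‖ * y j := by
    filter_upwards [hopen.mem_nhds hx] with y hy
    rw [pder_Upsilon n hn hr0 hy j]
    unfold cfJ
    ring
  have hG : HasFDerivAt (fun y : EuclideanSpace ℝ (Fin n) => cfJ n r0 ‖y‖ * y j)
      ((cfJ n r0 ‖x‖) • (EuclideanSpace.proj j : EuclideanSpace ℝ (Fin n) →L[ℝ] ℝ)
        + (x j) • ((cdJ n r0 ‖x‖) • (‖x‖⁻¹ • innerSL ℝ x))) x := by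
    exact ((cfJ_hasDerivAt n hn hr0 hx).comp_hasFDerivAt_of_eq x
      (hasFDerivAt_norm' hx0) rfl).mul
      ((EuclideanSpace.proj j : EuclideanSpace ℝ (Fin n) →L[ℝ] ℝ).hasFDerivAt)
  show fderiv ℝ _ x (EuclideanSpace.single i 1) = _
  rw [heq.fderiv_eq, hG.fderiv]
  simp [EuclideanSpace.inner_single_right, EuclideanSpace.single_apply]
lemma sum_expand {n : ℕ} (x : Fin n → ℝ) (a Q R β γ : ℝ) :
    ∑ i, ∑ j, ((if i = j then (1:ℝ) else 0) - Q * (a * x i) * (a * x j))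
        * (R * (γ * (if j = i then (1:ℝ) else 0) + x j * (β * x i)))
    = R * (γ * n + β * (∑ i, x i ^ 2))
      - Q * R * (a^2 * (γ * (∑ i, x i ^ 2) + β * (∑ i, x i ^ 2)^2)) := by
  have h : ∀ i : Fin n, ∑ j, ((if i = j then (1:ℝ) else 0) - Q * (a * x i) * (a * x j))
        * (R * (γ * (if j = i then (1:ℝ) else 0) + x j * (β * x i)))
      = R * γ + x i ^ 2 * (R * β - Q * R * a^2 * γ - Q * R * a^2 * β * (∑ j, x j ^ 2)) := by
    intro i
    have expand : ∀ j : Fin n, ((if i = j then (1:ℝ) else 0) - Q * (a * x i) * (a * x j))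
        * (R * (γ * (if j = i then (1:ℝ) else 0) + x j * (β * x i)))
      = (if j = i then (R * γ + R * β * x i ^ 2 - Q * R * a^2 * γ * x i ^ 2) else 0)
        + (-(Q * R * a^2 * β * x i ^ 2)) * x j ^ 2 := by
      intro j
      by_cases hji : j = i
      · subst hji; simp; ring
      · have hij : ¬ i = j := fun h => hji h.symm
        simp only [if_neg hji, if_neg hij]; ring
    rw [Finset.sum_congr rfl (fun j _ => expand j), Finset.sum_add_distrib,
      Finset.sum_ite_eq' Finset.univ i, ← Finset.mul_sum]
    simp only [Finset.mem_univ, if_true]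
    ring
  rw [Finset.sum_congr rfl (fun i _ => h i), Finset.sum_add_distrib, Finset.sum_const,
    ← Finset.sum_mul, Finset.card_univ, Fintype.card_fin, nsmul_eq_mul]
  ring
lemma scalar_id (k : ℕ) (r r0 v w : ℝ) (hr : 0 < r) (hr0 : 0 < r0) (hv : 0 < v) (hw : 0 < w)
    (hv2 : v^2 = w^2 - 1) (hwr : w * r0^k = r^k) :
    (v/w) * ((-(v⁻¹) * r⁻¹)*((k:ℝ)+2)
        + ((-((2*(k:ℝ)) * (w^2/(r/r0)) * (-(1/2)) * (v⁻¹ * (v^2)⁻¹) * (1/r0)) * r⁻¹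
            + -(v⁻¹) * (-(r^2)⁻¹)) * r⁻¹) * r^2)
      - (v^2/w^2)*(v/w)*((-(v⁻¹) * r⁻¹)^2*((-(v⁻¹) * r⁻¹)*r^2
        + ((-((2*(k:ℝ)) * (w^2/(r/r0)) * (-(1/2)) * (v⁻¹ * (v^2)⁻¹) * (1/r0)) * r⁻¹
            + -(v⁻¹) * (-(r^2)⁻¹)) * r⁻¹)*(r^2)^2))
    = -(r0^k * (r^(k+1))⁻¹) := by
  have hrk : (0:ℝ) < r^k := pow_pos hr k
  have h0k : (0:ℝ) < r0^k := pow_pos hr0 k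
  have hr0k : r0 ^ k = r ^ k / w := by field_simp [hw.ne'] ; linarith [hwr]
  rw [hr0k, pow_succ]
  field_simp
  ring_nf
  linear_combination (-(w^2*(k:ℝ)*r*r^k)) * hv2


/-- with `Υ(x) = b(‖x‖)` on `{‖x‖ > r0}`, denoting by `p` the gradient
of `Υ` at `x` (components `p i = ∂_i Υ(x)`) and by `H` its Hessian matrix
(`H i j = ∂_i ∂_j Υ(x)`), one has
`∑_{i,j} (δ_{ij} - (1+‖p‖²)⁻¹ p_i p_j) (1+‖p‖²)^{-1/2} H_{ij} = -r0^{n-2} ‖x‖^{1-n}`. -/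
theorem jang_operator_of_barrier (n : ℕ) (hn : 4 ≤ n) (r0 : ℝ) (hr0 : 0 < r0)
    (x : EuclideanSpace ℝ (Fin n)) (hx : r0 < ‖x‖)
    (p : Fin n → ℝ) (hp : ∀ i, p i = pder (fun y => jangB n r0 ‖y‖) i x)
    (H : Fin n → Fin n → ℝ)
    (hH : ∀ i j, H i j = pder (pder (fun y => jangB n r0 ‖y‖) j) i x) :
    ∑ i, ∑ j,
        ((if i = j then (1 : ℝ) else 0) - (1 + ∑ k, p k ^ 2)⁻¹ * p i * p j)
          * ((1 + ∑ k, p k ^ 2) ^ (-(1 / 2) : ℝ) * H i j)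
      = -(r0 ^ ((n : ℝ) - 2) * ‖x‖ ^ ((1 : ℝ) - n)) := by
  have hr : 0 < ‖x‖ := lt_trans hr0 hx
  have hu : 1 < ‖x‖ / r0 := (one_lt_div hr0).2 hx
  have hu0 : 0 < ‖x‖ / r0 := lt_trans one_pos hu
  set k : ℕ := n - 2 with hk
  have hkn : (k:ℝ) = (n:ℝ) - 2 := by
    rw [hk]
    push_cast [Nat.cast_sub (show 2 ≤ n by omega)]
    ring
  have hA : 0 < (‖x‖/r0) ^ (2*n-4) - 1 := ggJ_base_pos (by omega) hu
  set w : ℝ := (‖x‖/r0) ^ k with hwdef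
  have hw1 : 1 < w := one_lt_pow₀ hu (by omega)
  have hw0 : 0 < w := lt_trans one_pos hw1
  have hAw : (‖x‖/r0) ^ (2*n-4) - 1 = w^2 - 1 := by
    rw [hwdef, ← pow_mul]
    congr 2
    omega
  set v : ℝ := Real.sqrt ((‖x‖/r0) ^ (2*n-4) - 1) with hvdef
  have hv0 : 0 < v := Real.sqrt_pos.2 hA
  have hv2 : v^2 = w^2 - 1 := by rw [hvdef, Real.sq_sqrt hA.le, hAw]
  have hggv : ggJ (2*n-4) (‖x‖/r0) = v⁻¹ := by
    unfold ggJ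
    rw [Real.rpow_neg hA.le, hvdef, Real.sqrt_eq_rpow]
  set a : ℝ := -(v⁻¹) * ‖x‖⁻¹ with hadef
  have hp' : ∀ i, p i = a * x i := by
    intro i
    rw [hp i, pder_Upsilon n hn hr0 hx i, hggv]
  have hγ : cfJ n r0 ‖x‖ = a := by
    unfold cfJ
    rw [hggv]
  -- the second rpow value
  have hginv : ((‖x‖/r0) ^ (2*n-4) - 1) ^ (-(1/2) : ℝ) = v⁻¹ := by
    rw [Real.rpow_neg hA.le, hvdef, Real.sqrt_eq_rpow]
  have hg3 : ((‖x‖/r0) ^ (2*n-4) - 1) ^ (-(1/2) - 1 : ℝ) = v⁻¹ * (v^2)⁻¹ := by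
    rw [show (-(1/2) - 1 : ℝ) = -(1/2) + (-1) by ring, Real.rpow_add hA,
      Real.rpow_neg_one, hginv, hvdef, Real.sq_sqrt hA.le]
  have hpow : (‖x‖/r0) ^ (2*n-4-1) = w^2/(‖x‖/r0) := by
    rw [eq_div_iff hu0.ne', ← pow_succ, hwdef, ← pow_mul]
    congr 1
    omega
  have hcast : ((2*n-4 : ℕ) : ℝ) = 2*(k:ℝ) := by
    rw [hkn, Nat.cast_sub (by omega : 4 ≤ 2*n)]
    push_cast
    ring
  have hcd : cdJ n r0 ‖x‖
      = -((2*(k:ℝ)) * (w^2/(‖x‖/r0)) * (-(1/2)) * (v⁻¹ * (v^2)⁻¹) * (1/r0)) * ‖x‖⁻¹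
        + -(v⁻¹) * (-(‖x‖^2)⁻¹) := by
    unfold cdJ
    rw [hggv, hg3, hpow, hcast]
  -- the quantity 1 + |p|^2
  have hSx : ∑ i, x i ^ 2 = ‖x‖^2 := by
    rw [EuclideanSpace.norm_eq, Real.sq_sqrt (by positivity)]
    congr 1
    funext i
    rw [Real.norm_eq_abs, sq_abs]
  have hSp : (1 + ∑ j, p j ^ 2) = w^2/v^2 := by
    have : ∑ j, p j ^ 2 = a^2 * ∑ j, x j ^ 2 := by
      rw [Finset.mul_sum]
      exact Finset.sum_congr rfl fun j _ => by rw [hp' j]; ring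
    rw [this, hSx, hadef]
    field_simp
    linear_combination (hv2 : v^2 = ((‖x‖/r0)^k)^2 - 1)
  have hQ : (1 + ∑ j, p j ^ 2)⁻¹ = v^2/w^2 := by
    rw [hSp, inv_div]
  have hR : (1 + ∑ j, p j ^ 2) ^ (-(1/2) : ℝ) = v/w := by
    rw [hSp, show w^2/v^2 = (w/v)^2 by rw [div_pow],
      ← Real.rpow_natCast (w/v) 2, ← Real.rpow_mul (by positivity)]
    norm_num
    rw [Real.rpow_neg_one, inv_div]
  -- rewrite each term of the double sum
  have hterm : ∀ i j : Fin n,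
      ((if i = j then (1 : ℝ) else 0) - (1 + ∑ k, p k ^ 2)⁻¹ * p i * p j)
          * ((1 + ∑ k, p k ^ 2) ^ (-(1 / 2) : ℝ) * H i j)
      = ((if i = j then (1:ℝ) else 0) - (v^2/w^2) * (a * x i) * (a * x j))
          * ((v/w) * (a * (if j = i then (1:ℝ) else 0) + x j * ((cdJ n r0 ‖x‖ * ‖x‖⁻¹) * x i))) := by
    intro i j
    rw [hQ, hR, hp' i, hp' j, hH i j, hessian_Upsilon n hn hr0 hx i j, hγ]
    ring
  rw [Finset.sum_congr rfl fun i _ => Finset.sum_congr rfl fun j _ => hterm i j,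
    sum_expand x a (v^2/w^2) (v/w) (cdJ n r0 ‖x‖ * ‖x‖⁻¹) a, hSx, hcd]
  -- rewrite the right-hand side
  have hrhs1 : r0 ^ ((n : ℝ) - 2) = r0 ^ k := by
    rw [← hkn, Real.rpow_natCast]
  have hrhs2 : ‖x‖ ^ ((1 : ℝ) - n) = (‖x‖ ^ (k+1))⁻¹ := by
    rw [show ((1:ℝ) - n) = -((k:ℝ)+1) by rw [hkn]; ring, Real.rpow_neg hr.le]
    congr 1
    rw [show ((k:ℝ)+1) = ((k+1 : ℕ) : ℝ) by push_cast; ring, Real.rpow_natCast]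
  rw [hrhs1, hrhs2, show ((n:ℕ):ℝ) = (k:ℝ) + 2 by rw [hkn]; ring]
  have hwr : w * r0^k = ‖x‖^k := by
    rw [hwdef, div_pow]
    field_simp
  linear_combination scalar_id k ‖x‖ r0 v w hr hr0 hv0 hw0 hv2 hwr
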